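/- Let (ℱ, 𝒮) be a digraph-source sequence of size ℓ, B ⊆ ⋃_i V(G_i), and let G^D be the auxiliary digraph obtained by taking disjoint copies V_1,...,V_ℓ of G_1,...,G_ℓ, adding all vertices of B, and adding an edge from each copy of a vertex v to the vertex v ∈ B whenever v ∈ B. Let S′ be the union of the copies of the S_i in the respective V_i. Then: (i) for every set of D-paths 𝒫 with respect to (ℱ, 𝒮) and B there is a set 𝒫′ of pairwise vertex-disjoint S′ → B paths in G^D with |𝒫′| ≥ |𝒫|; and (ii) for every set 𝒫′ of pairwise vertex-disjoint S′ → B paths in G^D there is a set of D-paths 𝒫 with |𝒫| ≥ |𝒫′|. -/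

import Mathlib

/-- A (directed) path given as a nonempty list of pairwise-distinct vertices
with consecutive pairs being edges of the digraph `G`. -/
def IsPathList {V : Type*} (G : V → V → Prop) (p : List V) : Prop :=
  p ≠ [] ∧ p.Nodup ∧ p.Chain' G

/-- The first vertex of the list `p` belongs to `A`. -/
def FirstIn {V : Type*} (p : List V) (A : Set V) : Prop := ∃ a ∈ A, p.head? = some a

/-- The last vertex of the list `p` belongs to `A`. -/
def LastIn {V : Type*} (p : List V) (A : Set V) : Prop := ∃ a ∈ A, p.getLast? = some a

/-- `X` is an `(A,B)`-separator in `G`: every path of `G` starting in `A` and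
ending in `B` meets `X`. -/
def IsSeparator {V : Type*} (G : V → V → Prop) (A B X : Set V) : Prop :=
  ∀ p : List V, IsPathList G p → FirstIn p A → LastIn p B → ∃ v ∈ p, v ∈ X

/-- Two lists of vertices share no vertex. -/
def ListsDisjoint {V : Type*} (p q : List V) : Prop := ∀ v, v ∈ p → v ∉ q

/-- An `(ℱ,𝒮)`-respecting system of paths, encoded as a finite set of pairs
`(i, p)` where `p` is a path of `G i` starting in `S i`, and paths assigned to
the same index (i.e. in the same part of the defining partition) are pairwise
vertex-disjoint. -/
def RespectingSys {V : Type*} {ℓ : ℕ} (G : Fin ℓ → V → V → Prop) (S : Fin ℓ → Set V)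
    (P : Finset (Fin ℓ × List V)) : Prop :=
  (∀ q ∈ P, IsPathList (G q.1) q.2 ∧ FirstIn q.2 (S q.1)) ∧
  (∀ q ∈ P, ∀ q' ∈ P, q ≠ q' → q.1 = q'.1 → ListsDisjoint q.2 q'.2)

/-- A set of D-paths w.r.t. `(ℱ,𝒮)` and `B` : a respecting system whose paths
have pairwise distinct last vertices, all lying in `B`. -/
def DPathSys {V : Type*} {ℓ : ℕ} (G : Fin ℓ → V → V → Prop) (S : Fin ℓ → Set V)
    (B : Set V) (P : Finset (Fin ℓ × List V)) : Prop :=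
  RespectingSys G S P ∧ (∀ q ∈ P, LastIn q.2 B) ∧
  (∀ q ∈ P, ∀ q' ∈ P, q ≠ q' → q.2.getLast? ≠ q'.2.getLast?)

/-- The auxiliary digraph `G^D`: disjoint copies of the `G i` (on `Fin ℓ × V`),
together with the vertices of `B` (the `Sum.inr` part), with an edge from each
copy of `v` to the vertex `v ∈ B`. -/
def AuxD {V : Type*} {ℓ : ℕ} (G : Fin ℓ → V → V → Prop) (B : Set V) :
    (Fin ℓ × V) ⊕ V → (Fin ℓ × V) ⊕ V → Prop :=
  fun x y => match x, y with
  | Sum.inl (i, u), Sum.inl (j, v) => i = j ∧ G i u v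
  | Sum.inl (_, u), Sum.inr v => u = v ∧ v ∈ B
  | _, _ => False

/-- The copies of the source sets inside the respective copies of the `G i`. -/
def AuxS {V : Type*} {ℓ : ℕ} (S : Fin ℓ → Set V) : Set ((Fin ℓ × V) ⊕ V) :=
  {w | ∃ i, ∃ s ∈ S i, w = Sum.inl (i, s)}


lemma auxStruct {V : Type*} {ℓ : ℕ} (G : Fin ℓ → V → V → Prop) (B : Set V) :
    ∀ (p : List ((Fin ℓ × V) ⊕ V)) (i : Fin ℓ) (s b : V),
      p.Chain' (AuxD G B) → p.head? = some (Sum.inl (i, s)) →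
      p.getLast? = some (Sum.inr b) →
      ∃ q : List V, p = q.map (fun v => Sum.inl (i, v)) ++ [Sum.inr b] ∧
        q.head? = some s ∧ q.getLast? = some b ∧ q.Chain' (G i) ∧ b ∈ B := by
  intro p
  induction p with
  | nil => intro i s b _ h _; simp at h
  | cons x rest ih =>
    intro i s b hch hhd hlast
    simp only [List.head?_cons, Option.some_inj] at hhd
    subst hhd
    cases rest with
    | nil => simp at hlast
    | cons y rest' =>
      have hedge : AuxD G B (Sum.inl (i, s)) y ∧ List.Chain' (AuxD G B) (y :: rest') :=
        List.isChain_cons_cons.mp hch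
      have hlast' : (y :: rest').getLast? = some (Sum.inr b) := by
        rw [← hlast]; exact List.getLast?_cons_cons.symm
      cases y with
      | inl jv =>
        obtain ⟨j, v⟩ := jv
        obtain ⟨hij, hG⟩ : i = j ∧ G i s v := hedge.1
        subst hij
        obtain ⟨q', hq'eq, hq'hd, hq'last, hq'ch, hB⟩ := ih i v b hedge.2 (by simp) hlast'
        refine ⟨s :: q', by simp [hq'eq], rfl, ?_, ?_, hB⟩
        · rcases q' with _ | ⟨v', t⟩
          · simp at hq'hd
          · simpa using hq'last
        · rcases q' with _ | ⟨v', t⟩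
          · simp at hq'hd
          · simp only [List.head?_cons, Option.some_inj] at hq'hd
            subst hq'hd
            exact List.isChain_cons_cons.mpr ⟨hG, hq'ch⟩
      | inr v =>
        obtain ⟨hsv, hvB⟩ : s = v ∧ v ∈ B := hedge.1
        subst hsv
        cases rest' with
        | nil =>
          simp only [List.getLast?_cons_cons, List.getLast?_singleton, Option.some_inj,
            Sum.inr.injEq] at hlast
          subst hlast
          exact ⟨[s], by simp, rfl, rfl, List.isChain_singleton _, hvB⟩
        | cons z t => exact absurd (List.isChain_cons_cons.mp hedge.2).1 (by simp [AuxD])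

def ExtractIdx {V : Type*} {ℓ : ℕ} (i0 : Fin ℓ) (p : List ((Fin ℓ × V) ⊕ V)) : Fin ℓ :=
  match p with
  | Sum.inl (i, _) :: _ => i
  | _ => i0

def ToV {V : Type*} {ℓ : ℕ} : (Fin ℓ × V) ⊕ V → Option V
  | Sum.inl (_, v) => some v
  | _ => none

def Extract {V : Type*} {ℓ : ℕ} (i0 : Fin ℓ) (p : List ((Fin ℓ × V) ⊕ V)) :
    Fin ℓ × List V := (ExtractIdx i0 p, p.filterMap ToV)

lemma extractIdx_eq {V : Type*} {ℓ : ℕ} (i0 i : Fin ℓ) (s : V) (p : List ((Fin ℓ × V) ⊕ V))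
    (h : p.head? = some (Sum.inl (i, s))) : ExtractIdx i0 p = i := by
  cases p with
  | nil => simp at h
  | cons x t => simp only [List.head?_cons, Option.some_inj] at h; subst h; rfl

lemma filterMap_toV {V : Type*} {ℓ : ℕ} (i : Fin ℓ) (q : List V) (b : V) :
    ((q.map (fun v => Sum.inl (i, v)) ++ [Sum.inr b] :
      List ((Fin ℓ × V) ⊕ V))).filterMap ToV = q := by
  simp only [List.filterMap_append, List.filterMap_map]
  have : (ToV ∘ fun v => (Sum.inl (i, v) : (Fin ℓ × V) ⊕ V)) = some := rfl
  simp [this, ToV]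

/-- Correspondence between D-paths and disjoint paths in the auxiliary digraph
`G^D`: (i) from any set of D-paths one obtains at least as many pairwise
vertex-disjoint `S' → B` paths in `G^D`, and (ii) conversely. -/
theorem dpaths_aux_correspondence {V : Type*} [Fintype V] {ℓ : ℕ}
    (G : Fin ℓ → V → V → Prop) (S : Fin ℓ → Set V) (B : Set V) :
    (∀ P : Finset (Fin ℓ × List V), DPathSys G S B P →
      ∃ Q : Finset (List ((Fin ℓ × V) ⊕ V)),
        (∀ p ∈ Q, IsPathList (AuxD G B) p ∧ FirstIn p (AuxS S) ∧
          LastIn p (Sum.inr '' B)) ∧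
        (∀ p ∈ Q, ∀ q ∈ Q, p ≠ q → ListsDisjoint p q) ∧
        P.card ≤ Q.card) ∧
    (∀ Q : Finset (List ((Fin ℓ × V) ⊕ V)),
      (∀ p ∈ Q, IsPathList (AuxD G B) p ∧ FirstIn p (AuxS S) ∧
        LastIn p (Sum.inr '' B)) →
      (∀ p ∈ Q, ∀ q ∈ Q, p ≠ q → ListsDisjoint p q) →
      ∃ P : Finset (Fin ℓ × List V), DPathSys G S B P ∧ Q.card ≤ P.card) := by
  classical
  constructor
  · -- Direction (i)
    intro P hP
    obtain ⟨⟨hpath, hdisj⟩, hlastB, hlastne⟩ := hP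
    set F : Fin ℓ × List V → List ((Fin ℓ × V) ⊕ V) :=
      fun r => r.2.map (fun v => Sum.inl (r.1, v)) ++ (r.2.getLast?.map Sum.inr).toList with hF
    have key : ∀ r ∈ P, ∃ b ∈ B, r.2.getLast? = some b ∧
        F r = r.2.map (fun v => Sum.inl (r.1, v)) ++ [Sum.inr b] := by
      intro r hr
      obtain ⟨b, hbB, hlast⟩ := hlastB r hr
      exact ⟨b, hbB, hlast, by simp [hF, hlast]⟩
    have memF : ∀ r ∈ P, ∀ b, r.2.getLast? = some b →
        ∀ x, x ∈ F r ↔ ((∃ v ∈ r.2, x = Sum.inl (r.1, v)) ∨ x = Sum.inr b) := by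
      intro r hr b hb x
      obtain ⟨b', _, hb', hFr⟩ := key r hr
      rw [hb] at hb'; injection hb' with hb'; subst hb'
      rw [hFr]
      simp [eq_comm]
    refine ⟨P.image F, ?_, ?_, ?_⟩
    · intro p hp
      obtain ⟨r, hr, rfl⟩ := Finset.mem_image.mp hp
      obtain ⟨b, hbB, hlast, hFr⟩ := key r hr
      obtain ⟨⟨hne, hnd, hch⟩, hfirst⟩ := hpath r hr
      obtain ⟨s, hsS, hhd⟩ := hfirst
      have hinj : Function.Injective (fun v => (Sum.inl (r.1, v) : (Fin ℓ × V) ⊕ V)) := by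
        intro a b h; simpa using h
      refine ⟨⟨?_, ?_, ?_⟩, ?_, ?_⟩
      · rw [hFr]; simp
      · rw [hFr, List.nodup_append]
        refine ⟨hnd.map hinj, List.nodup_singleton _, ?_⟩
        intro x hx hx' hx''
        simp only [List.mem_singleton] at hx''
        subst hx''
        rintro rfl
        simp at hx
      · rw [hFr]; show List.IsChain _ _; rw [List.isChain_append]
        refine ⟨List.isChain_map_of_isChain _ (fun a b h => ⟨rfl, h⟩) hch, List.isChain_singleton _, ?_⟩
        intro x hx y hy
        simp only [List.head?_cons, Option.mem_def, Option.some_inj] at hy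
        subst hy
        rw [List.getLast?_map, hlast] at hx
        simp only [Option.mem_def, Option.map_some, Option.some_inj] at hx
        subst hx
        exact ⟨rfl, hbB⟩
      · refine ⟨Sum.inl (r.1, s), ⟨r.1, s, hsS, rfl⟩, ?_⟩
        rcases hr2 : r.2 with _ | ⟨s', t⟩
        · rw [hr2] at hhd; simp at hhd
        · rw [hr2] at hhd hFr
          simp only [List.head?_cons, Option.some_inj] at hhd
          subst hhd
          rw [hFr]; simp
      · exact ⟨Sum.inr b, ⟨b, hbB, rfl⟩, by rw [hFr, List.getLast?_concat]⟩
    · intro p hp q hq hpq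
      obtain ⟨r, hr, rfl⟩ := Finset.mem_image.mp hp
      obtain ⟨r', hr', rfl⟩ := Finset.mem_image.mp hq
      have hrr' : r ≠ r' := fun h => hpq (by rw [h])
      obtain ⟨b, hbB, hlast, hFr⟩ := key r hr
      obtain ⟨b', hbB', hlast', hFr'⟩ := key r' hr'
      intro x hx hx'
      rw [memF r hr b hlast x] at hx
      rw [memF r' hr' b' hlast' x] at hx'
      rcases hx with ⟨v, hv, rfl⟩ | rfl
      · rcases hx' with ⟨v', hv', he⟩ | he
        · simp only [Sum.inl.injEq, Prod.mk.injEq] at he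
          obtain ⟨h1, h2⟩ := he
          subst h2
          exact hdisj r hr r' hr' hrr' h1 v hv hv'
        · simp at he
      · rcases hx' with ⟨v', hv', he⟩ | he
        · simp at he
        · simp only [Sum.inr.injEq] at he
          subst he
          exact hlastne r hr r' hr' hrr' (by rw [hlast, hlast'])
    · rw [Finset.card_image_of_injOn]
      intro r hr r' hr' hFe
      by_contra hrr'
      obtain ⟨b, hbB, hlast, hFr⟩ := key r hr
      obtain ⟨b', hbB', hlast', hFr'⟩ := key r' hr'
      have : List.getLast? (F r) = List.getLast? (F r') := by rw [hFe]
      rw [hFr, hFr', List.getLast?_concat, List.getLast?_concat] at this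
      simp only [Option.some_inj, Sum.inr.injEq] at this
      subst this
      exact hlastne r hr r' hr' hrr' (by rw [hlast, hlast'])
  · -- Direction (ii)
    intro Q hQ hQdisj
    rcases Q.eq_empty_or_nonempty with rfl | ⟨p0, hp0⟩
    · exact ⟨∅, ⟨⟨fun q hq => by simp at hq, fun q hq => by simp at hq⟩,
        fun q hq => by simp at hq, fun q hq => by simp at hq⟩, by simp⟩
    obtain ⟨_, ⟨a0, ha0, _⟩, _⟩ := hQ p0 hp0
    obtain ⟨i0, s0, _, rfl⟩ := ha0
    have key : ∀ p ∈ Q, ∃ i q b, Extract i0 p = (i, q) ∧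
        p = q.map (fun v => Sum.inl (i, v)) ++ [Sum.inr b] ∧
        IsPathList (G i) q ∧ FirstIn q (S i) ∧ q.getLast? = some b ∧ b ∈ B := by
      intro p hp
      obtain ⟨⟨hne, hnd, hch⟩, hfirst, hlastQ⟩ := hQ p hp
      obtain ⟨a, haS, hhd⟩ := hfirst
      obtain ⟨i, s, hsS, rfl⟩ := haS
      obtain ⟨a', ⟨b, hbB, rfl⟩, hlast⟩ := hlastQ
      obtain ⟨q, hpeq, hqhd, hqlast, hqch, hbB'⟩ := auxStruct G B p i s b hch hhd hlast
      have hinj : Function.Injective (fun v => (Sum.inl (i, v) : (Fin ℓ × V) ⊕ V)) := by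
        intro a b h; simpa using h
      have hqnd : q.Nodup := by
        rw [hpeq, List.nodup_append] at hnd
        exact (List.nodup_map_iff hinj).mp hnd.1
      have hqne : q ≠ [] := by
        rintro rfl; simp at hqhd
      refine ⟨i, q, b, ?_, hpeq, ⟨hqne, hqnd, hqch⟩, ⟨s, hsS, hqhd⟩, hqlast, hbB⟩
      unfold Extract
      rw [extractIdx_eq i0 i s p hhd, hpeq, filterMap_toV]
    have memP : ∀ p ∈ Q, ∀ (i : Fin ℓ) (q : List V) (b : V), p = q.map (fun v => Sum.inl (i, v)) ++ [Sum.inr b] →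
        (∀ v ∈ q, Sum.inl (i, v) ∈ p) ∧ Sum.inr b ∈ p := by
      intro p hp i q b hpeq
      constructor
      · intro v hv
        rw [hpeq]
        exact List.mem_append_left _ (List.mem_map_of_mem hv)
      · rw [hpeq]
        exact List.mem_append_right _ (List.mem_singleton_self _)
    refine ⟨Q.image (Extract i0), ⟨⟨?_, ?_⟩, ?_, ?_⟩, ?_⟩
    · intro r hr
      obtain ⟨p, hp, rfl⟩ := Finset.mem_image.mp hr
      obtain ⟨i, q, b, he, hpeq, hpl, hfi, hql, hbB⟩ := key p hp
      rw [he]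
      exact ⟨hpl, hfi⟩
    · intro r hr r' hr' hrr' hi1
      obtain ⟨p, hp, rfl⟩ := Finset.mem_image.mp hr
      obtain ⟨p', hp', rfl⟩ := Finset.mem_image.mp hr'
      obtain ⟨i, q, b, he, hpeq, hpl, hfi, hql, hbB⟩ := key p hp
      obtain ⟨i', q', b', he', hpeq', hpl', hfi', hql', hbB'⟩ := key p' hp'
      rw [he, he'] at hi1 hrr' ⊢
      simp only at hi1
      subst hi1
      intro v hv hv'
      have hpp' : p ≠ p' := by rintro rfl; exact hrr' (by rw [← he, he'])
      exact hQdisj p hp p' hp' hpp' (Sum.inl (i, v))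
        ((memP p hp i q b hpeq).1 v hv) ((memP p' hp' i q' b' hpeq').1 v hv')
    · intro r hr
      obtain ⟨p, hp, rfl⟩ := Finset.mem_image.mp hr
      obtain ⟨i, q, b, he, hpeq, hpl, hfi, hql, hbB⟩ := key p hp
      rw [he]
      exact ⟨b, hbB, hql⟩
    · intro r hr r' hr' hrr'
      obtain ⟨p, hp, rfl⟩ := Finset.mem_image.mp hr
      obtain ⟨p', hp', rfl⟩ := Finset.mem_image.mp hr'
      obtain ⟨i, q, b, he, hpeq, hpl, hfi, hql, hbB⟩ := key p hp
      obtain ⟨i', q', b', he', hpeq', hpl', hfi', hql', hbB'⟩ := key p' hp'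
      rw [he, he']
      simp only [hql, hql', ne_eq, Option.some_inj]
      rintro rfl
      have hpp' : p ≠ p' := by rintro rfl; exact hrr' rfl
      exact hQdisj p hp p' hp' hpp' (Sum.inr b)
        (memP p hp i q b hpeq).2 (memP p' hp' i' q' b hpeq').2
    · rw [Finset.card_image_of_injOn]
      intro p hp p' hp' hee
      by_contra hpp'
      obtain ⟨i, q, b, he, hpeq, hpl, ⟨s, hsS, hqhd⟩, hql, hbB⟩ := key p hp
      obtain ⟨i', q', b', he', hpeq', hpl', hfi', hql', hbB'⟩ := key p' hp'
      rw [he, he'] at hee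
      simp only [Prod.mk.injEq] at hee
      obtain ⟨rfl, rfl⟩ := hee
      have hs : s ∈ q := List.mem_of_mem_head? hqhd
      exact hQdisj p hp p' hp' hpp' (Sum.inl (i, s))
        ((memP p hp i q b hpeq).1 s hs) ((memP p' hp' i q b' hpeq').1 s hs)
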